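/- Let α > 0 and β > 0. Consider the functional J(u) = (1/2)·∫_{-1}^{1} (u′(x))² dx + α·u(-1)² over functions u : ℝ → ℝ that are differentiable on [-1,1] with continuous derivative on [-1,1] and satisfy the constraint β·u(1)² = 1. Then the infimum of J over this class equals α/(β(4α+1)), and it is attained by the affine function u₀(x) = (1 + 2α(x+1))/(√β·(4α+1)), which satisfies u₀(1) = 1/√β, u₀(-1) = 1/(√β(4α+1)), and J(u₀) = α/(β(4α+1)). -/

import Mathlib

open Set intervalIntegral

theorem stmt_5 (α β : ℝ) (hα : 0 < α) (hβ : 0 < β)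
    (u₀ : ℝ → ℝ) (hu₀ : u₀ = fun x => (1 + 2 * α * (x + 1)) / (Real.sqrt β * (4 * α + 1))) :
    IsLeast
      {y : ℝ | ∃ u u' : ℝ → ℝ,
        (∀ x ∈ Icc (-1 : ℝ) 1, HasDerivWithinAt u (u' x) (Icc (-1 : ℝ) 1) x) ∧
        ContinuousOn u' (Icc (-1 : ℝ) 1) ∧
        β * (u 1) ^ 2 = 1 ∧
        y = (1 / 2) * (∫ x in (-1 : ℝ)..1, (u' x) ^ 2) + α * (u (-1)) ^ 2}
      (α / (β * (4 * α + 1))) ∧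
    u₀ 1 = 1 / Real.sqrt β ∧
    u₀ (-1) = 1 / (Real.sqrt β * (4 * α + 1)) ∧
    β * (u₀ 1) ^ 2 = 1 ∧
    (1 / 2) * (∫ x in (-1 : ℝ)..1, (deriv u₀ x) ^ 2) + α * (u₀ (-1)) ^ 2 =
      α / (β * (4 * α + 1)) := by
  have hsβ : (0:ℝ) < Real.sqrt β := Real.sqrt_pos.2 hβ
  have hsβ' : Real.sqrt β ≠ 0 := ne_of_gt hsβ
  have h4α : (4 * α + 1 : ℝ) ≠ 0 := by positivity
  have hsq : Real.sqrt β ^ 2 = β := Real.sq_sqrt hβ.le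
  set c : ℝ := Real.sqrt β * (4 * α + 1) with hc
  have hcne : c ≠ 0 := mul_ne_zero hsβ' h4α
  -- derivative of u₀
  have hderiv0 : ∀ x : ℝ, HasDerivAt u₀ (2 * α / c) x := by
    intro x
    rw [hu₀]
    have : HasDerivAt (fun x : ℝ => 1 + 2 * α * (x + 1)) (2 * α) x := by
      simpa using (((hasDerivAt_id x).add_const 1).const_mul (2 * α)).const_add 1
    exact this.div_const c
  have hderiv0' : ∀ x : ℝ, deriv u₀ x = 2 * α / c := fun x => (hderiv0 x).deriv
  have hval1 : u₀ 1 = 1 / Real.sqrt β := by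
    rw [hu₀]; simp only; rw [hc]; field_simp; ring
  have hvalm1 : u₀ (-1) = 1 / c := by
    rw [hu₀]; simp only; rw [hc]; field_simp; ring
  have hconstr0 : β * (u₀ 1) ^ 2 = 1 := by
    rw [hval1]; field_simp [hsq]; rw [hsq]
  have hkey : (1 / 2) * (2 * (2 * α / c) ^ 2) + α * (1 / c) ^ 2 = α / (β * (4 * α + 1)) := by
    have hβne : β ≠ 0 := ne_of_gt hβ
    rw [hc]
    field_simp
    linear_combination (-(4 * α + 1)) * hsq
  have hJ0 : (1 / 2) * (∫ x in (-1 : ℝ)..1, (deriv u₀ x) ^ 2) + α * (u₀ (-1)) ^ 2 =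
      α / (β * (4 * α + 1)) := by
    have h1 : (∫ x in (-1 : ℝ)..1, (deriv u₀ x) ^ 2) = 2 * (2 * α / c) ^ 2 := by
      simp only [hderiv0']
      rw [intervalIntegral.integral_const]
      norm_num
    rw [h1, hvalm1, hkey]
  refine ⟨⟨⟨u₀, fun _ => 2 * α / c, fun x _ => (hderiv0 x).hasDerivWithinAt,
      continuousOn_const, hconstr0, ?_⟩, ?_⟩, hval1, hvalm1, hconstr0, hJ0⟩
  · have h1 : (∫ x in (-1 : ℝ)..1, (2 * α / c) ^ 2) = 2 * (2 * α / c) ^ 2 := by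
      rw [intervalIntegral.integral_const]
      norm_num
    rw [h1, hvalm1, hkey]
  · rintro y ⟨u, u', hder, hu', hconstr, hy⟩
    set a := u (-1) with ha
    set b := u 1 with hb
    have hcontu : ContinuousOn u (Icc (-1 : ℝ) 1) := fun x hx =>
      (hder x hx).continuousWithinAt
    have hderAt : ∀ x ∈ Ioo (-1 : ℝ) 1, HasDerivAt u (u' x) x := by
      intro x hx
      exact (hder x (Ioo_subset_Icc_self hx)).hasDerivAt (Icc_mem_nhds hx.1 hx.2)
    have huIcc : uIcc (-1 : ℝ) 1 = Icc (-1 : ℝ) 1 := uIcc_of_le (by norm_num)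
    have hint : IntervalIntegrable u' MeasureTheory.volume (-1) 1 :=
      (hu'.mono (by rw [huIcc])).intervalIntegrable
    have hftc : (∫ x in (-1 : ℝ)..1, u' x) = b - a := by
      rw [hb, ha]
      exact intervalIntegral.integral_eq_sub_of_hasDeriv_right_of_le (by norm_num) hcontu
        (fun x hx => (hderAt x hx).hasDerivWithinAt) hint
    set I : ℝ := ∫ x in (-1 : ℝ)..1, u' x with hI
    set D : ℝ := ∫ x in (-1 : ℝ)..1, (u' x) ^ 2 with hD
    have hintsq : IntervalIntegrable (fun x => (u' x) ^ 2) MeasureTheory.volume (-1) 1 :=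
      ((hu'.pow 2).mono (by rw [huIcc])).intervalIntegrable
    have hintmul : IntervalIntegrable (fun x => 2 * (I / 2) * u' x) MeasureTheory.volume (-1) 1 :=
      hint.const_mul _
    have hexp : (∫ x in (-1 : ℝ)..1, (u' x - I / 2) ^ 2)
        = D - 2 * (I / 2) * I + (I / 2) ^ 2 * 2 := by
      have e1 : (fun x => (u' x - I / 2) ^ 2)
          = fun x => ((u' x) ^ 2 - 2 * (I / 2) * u' x) + (I / 2) ^ 2 := by
        funext x; ring
      rw [e1, intervalIntegral.integral_add (hintsq.sub hintmul) intervalIntegrable_const,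
        intervalIntegral.integral_sub hintsq hintmul,
        intervalIntegral.integral_const_mul, intervalIntegral.integral_const]
      rw [hD, hI]
      norm_num
      ring
    have hnn : 0 ≤ ∫ x in (-1 : ℝ)..1, (u' x - I / 2) ^ 2 :=
      intervalIntegral.integral_nonneg (by norm_num) (fun x _ => sq_nonneg _)
    have hcs : (b - a) ^ 2 ≤ 2 * D := by
      rw [← hftc]
      nlinarith [hexp ▸ hnn]
    rw [hy]
    rw [div_le_iff₀ (by positivity)]
    nlinarith [mul_nonneg hβ.le (sub_nonneg.2 hcs),
      mul_nonneg hβ.le (sq_nonneg ((4 * α + 1) * a - b)),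
      mul_nonneg hα.le (mul_nonneg hβ.le (sub_nonneg.2 hcs)),
      mul_nonneg hα.le (mul_nonneg hβ.le (sq_nonneg ((4 * α + 1) * a - b))),
      hconstr, hα.le, hβ.le]
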